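/- For every integer n ≥ 2, the set of admissible configurations of size n+1 is finite and its cardinality equals twice the cardinality of the (finite) set of admissible configurations of size n. -/

import Mathlib

/-- The maximum entry of a finite set of integers (`0` for the empty set). -/
def fmax (C : Finset ℤ) : ℤ := WithBot.unbotD 0 C.max

/-- The minimum entry of a finite set of integers (`0` for the empty set). -/
def fmin (C : Finset ℤ) : ℤ := WithTop.untopD 0 C.min

/-- A *chain* is a nonempty set of integers of the form `{c, c-2, …, c-2k}`. -/
def IsChainSet (C : Finset ℤ) : Prop :=
  ∃ (c : ℤ) (k : ℕ), C = (Finset.range (k + 1)).image (fun i : ℕ => c - 2 * (i : ℤ))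

/-- Two chains with disjoint entries, with maxima `A, B` and minima `a, b`, are *linked*
if `A > B > a` or `B > A > b`. -/
def LinkedChains (C D : Finset ℤ) : Prop :=
  Disjoint C D ∧
    ((fmax D < fmax C ∧ fmin C < fmax D) ∨ (fmax C < fmax D ∧ fmin D < fmax C))

/-- The set of all entries of a collection of chains. -/
def entriesOf (S : Finset (Finset ℤ)) : Finset ℤ := S.biUnion id

/-- A finite collection of pairwise disjoint chains. -/
def IsChainCollection (S : Finset (Finset ℤ)) : Prop :=
  (∀ C ∈ S, IsChainSet C) ∧ ∀ C ∈ S, ∀ D ∈ S, C ≠ D → Disjoint C D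

/-- A collection of pairwise disjoint chains is *interlaced* if any two of its chains are
joined by a finite sequence of chains of the collection in which consecutive chains are
linked. -/
def Interlaced (S : Finset (Finset ℤ)) : Prop :=
  ∀ C ∈ S, ∀ D ∈ S,
    Relation.ReflTransGen (fun X Y => X ∈ S ∧ Y ∈ S ∧ LinkedChains X Y) C D

/-- An *admissible configuration of size `n`*: an interlaced collection of pairwise disjoint
chains of positive integers with `n` entries in total and smallest entry equal to `1`. -/
def AdmissibleConfig (n : ℕ) (S : Finset (Finset ℤ)) : Prop :=
  IsChainCollection S ∧ Interlaced S ∧ (entriesOf S).card = n ∧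
    (∀ x ∈ entriesOf S, 0 < x) ∧ (1 : ℤ) ∈ entriesOf S

namespace AC
open Finset

lemma fmax_mem {C : Finset ℤ} (h : C.Nonempty) : fmax C ∈ C := by
  obtain ⟨m, hm⟩ := Finset.max_of_nonempty h
  rw [fmax, hm]
  exact Finset.mem_of_max hm

lemma le_fmax {C : Finset ℤ} {x : ℤ} (hx : x ∈ C) : x ≤ fmax C := by
  obtain ⟨m, hm⟩ := Finset.max_of_mem hx
  have := Finset.le_max hx
  rw [hm] at this
  rw [fmax, hm]
  exact_mod_cast this

lemma fmin_mem {C : Finset ℤ} (h : C.Nonempty) : fmin C ∈ C := by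
  obtain ⟨m, hm⟩ := Finset.min_of_nonempty h
  rw [fmin, hm]
  exact Finset.mem_of_min hm

lemma fmin_le {C : Finset ℤ} {x : ℤ} (hx : x ∈ C) : fmin C ≤ x := by
  obtain ⟨m, hm⟩ := Finset.min_of_mem hx
  have := Finset.min_le hx
  rw [hm] at this
  rw [fmin, hm]
  exact_mod_cast this

lemma fmax_eq {C : Finset ℤ} {m : ℤ} (hm : m ∈ C) (h : ∀ x ∈ C, x ≤ m) : fmax C = m :=
  le_antisymm (h _ (fmax_mem ⟨m, hm⟩)) (le_fmax hm)

lemma fmin_eq {C : Finset ℤ} {m : ℤ} (hm : m ∈ C) (h : ∀ x ∈ C, m ≤ x) : fmin C = m :=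
  le_antisymm (fmin_le hm) (h _ (fmin_mem ⟨m, hm⟩))

lemma fmin_le_fmax {C : Finset ℤ} (h : C.Nonempty) : fmin C ≤ fmax C :=
  le_trans (fmin_le (fmax_mem h)) le_rfl

/-- the canonical chain -/
def mkChain (c : ℤ) (k : ℕ) : Finset ℤ :=
  (Finset.range (k + 1)).image (fun i : ℕ => c - 2 * (i : ℤ))

lemma isChainSet_mkChain (c : ℤ) (k : ℕ) : IsChainSet (mkChain c k) := ⟨c, k, rfl⟩

lemma mem_mkChain {c : ℤ} {k : ℕ} {x : ℤ} :
    x ∈ mkChain c k ↔ ∃ i : ℕ, i ≤ k ∧ x = c - 2 * (i : ℤ) := by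
  simp only [mkChain, mem_image, mem_range, Nat.lt_succ_iff]
  constructor
  · rintro ⟨i, hi, rfl⟩; exact ⟨i, hi, rfl⟩
  · rintro ⟨i, hi, rfl⟩; exact ⟨i, hi, rfl⟩

lemma mem_mkChain' {c : ℤ} {k : ℕ} {x : ℤ} :
    x ∈ mkChain c k ↔ c - 2 * k ≤ x ∧ x ≤ c ∧ 2 ∣ c - x := by
  rw [mem_mkChain]
  constructor
  · rintro ⟨i, hi, rfl⟩
    refine ⟨by omega, by omega, ⟨i, by ring⟩⟩
  · rintro ⟨h1, h2, d, hd⟩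
    refine ⟨d.toNat, by omega, by omega⟩

lemma mkChain_nonempty (c : ℤ) (k : ℕ) : (mkChain c k).Nonempty :=
  ⟨c, mem_mkChain'.2 ⟨by omega, le_rfl, ⟨0, by ring⟩⟩⟩

lemma fmax_mkChain (c : ℤ) (k : ℕ) : fmax (mkChain c k) = c := by
  refine fmax_eq (mem_mkChain'.2 ⟨by omega, le_rfl, ⟨0, by ring⟩⟩) ?_
  intro x hx
  exact (mem_mkChain'.1 hx).2.1

lemma fmin_mkChain (c : ℤ) (k : ℕ) : fmin (mkChain c k) = c - 2 * k := by
  refine fmin_eq (mem_mkChain'.2 ⟨le_rfl, by omega, ⟨k, by ring⟩⟩) ?_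
  intro x hx
  exact (mem_mkChain'.1 hx).1

lemma card_mkChain (c : ℤ) (k : ℕ) : (mkChain c k).card = k + 1 := by
  rw [mkChain, Finset.card_image_of_injective _ (fun i j h => by omega), Finset.card_range]

lemma insert_top_mkChain (c : ℤ) (k : ℕ) :
    insert (c + 2) (mkChain c k) = mkChain (c + 2) (k + 1) := by
  ext x
  simp only [Finset.mem_insert, mem_mkChain']
  constructor
  · rintro (rfl | ⟨h1, h2, d, hd⟩)
    · exact ⟨by omega, le_rfl, ⟨0, by ring⟩⟩
    · exact ⟨by omega, by omega, ⟨d + 1, by omega⟩⟩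
  · rintro ⟨h1, h2, d, hd⟩
    rcases eq_or_lt_of_le h2 with rfl | h
    · left; rfl
    · right; exact ⟨by omega, by omega, ⟨d - 1, by omega⟩⟩

lemma erase_top_mkChain (c : ℤ) (k : ℕ) :
    (mkChain c (k + 1)).erase c = mkChain (c - 2) k := by
  ext x
  simp only [Finset.mem_erase, mem_mkChain']
  constructor
  · rintro ⟨hne, h1, h2, d, hd⟩
    exact ⟨by omega, by omega, ⟨d - 1, by omega⟩⟩
  · rintro ⟨h1, h2, d, hd⟩
    exact ⟨by omega, by omega, by omega, ⟨d + 1, by omega⟩⟩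

lemma mkChain_zero (c : ℤ) : mkChain c 0 = {c} := by
  ext x
  simp only [mem_mkChain', Finset.mem_singleton]
  constructor
  · rintro ⟨h1, h2, d, hd⟩; omega
  · rintro rfl; exact ⟨by omega, le_rfl, ⟨0, by ring⟩⟩

/-- a chain covering x, x+1 contains x or x+1 -/
lemma chain_hits {c : ℤ} {k : ℕ} {x : ℤ} (h1 : c - 2 * k ≤ x) (h2 : x + 1 ≤ c) :
    x ∈ mkChain c k ∨ x + 1 ∈ mkChain c k := by
  rcases Int.even_or_odd (c - x) with ⟨d, hd⟩ | ⟨d, hd⟩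
  · left; exact mem_mkChain'.2 ⟨h1, by omega, ⟨d, by omega⟩⟩
  · right; exact mem_mkChain'.2 ⟨by omega, h2, ⟨d, by omega⟩⟩

lemma chain_nonempty {C : Finset ℤ} (h : IsChainSet C) : C.Nonempty := by
  obtain ⟨c, k, rfl⟩ := h
  exact ⟨c - 2 * ((0 : ℕ) : ℤ),
    Finset.mem_image.2 ⟨0, Finset.mem_range.2 (Nat.succ_pos k), rfl⟩⟩

lemma mem_entriesOf {S : Finset (Finset ℤ)} {x : ℤ} :
    x ∈ entriesOf S ↔ ∃ C ∈ S, x ∈ C := by simp [entriesOf]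

lemma chain_unique {S : Finset (Finset ℤ)} (hcol : IsChainCollection S)
    {C D : Finset ℤ} {x : ℤ} (hC : C ∈ S) (hD : D ∈ S) (hxC : x ∈ C) (hxD : x ∈ D) :
    C = D := by
  by_contra h
  exact (Finset.disjoint_left.1 (hcol.2 C hC D hD h) hxC) hxD

/-- the cover property: every adjacent pair below the max is spanned by some chain -/
def Cover (S : Finset (Finset ℤ)) : Prop :=
  ∀ x : ℤ, 1 ≤ x → x + 1 ≤ fmax (entriesOf S) →
    ∃ C ∈ S, fmin C ≤ x ∧ x + 1 ≤ fmax C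

lemma linked_symm {C D : Finset ℤ} (h : LinkedChains C D) : LinkedChains D C :=
  ⟨h.1.symm, h.2.symm⟩

lemma interlaced_of_cover {S : Finset (Finset ℤ)} (hcol : IsChainCollection S)
    (hpos : ∀ x ∈ entriesOf S, 0 < x) (hcov : Cover S) : Interlaced S := by
  set M := fmax (entriesOf S) with hM
  set r := fun X Y => X ∈ S ∧ Y ∈ S ∧ LinkedChains X Y with hr
  have hsymm : ∀ {X Y}, r X Y → r Y X := by
    rintro X Y ⟨h1, h2, h3⟩; exact ⟨h2, h1, linked_symm h3⟩
  have hle : ∀ C ∈ S, fmax C ≤ M := by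
    intro C hC
    exact le_fmax (mem_entriesOf.2 ⟨C, hC, fmax_mem (chain_nonempty (hcol.1 C hC))⟩)
  -- every chain reaches a chain of max M
  have key : ∀ m : ℕ, ∀ C ∈ S, (M - fmax C).toNat = m →
      ∃ T ∈ S, fmax T = M ∧ Relation.ReflTransGen r C T := by
    intro m
    induction m using Nat.strong_induction_on with
    | _ m ih =>
      intro C hC hm
      rcases eq_or_lt_of_le (hle C hC) with he | hlt
      · exact ⟨C, hC, he, Relation.ReflTransGen.refl⟩
      · have hCne : C.Nonempty := chain_nonempty (hcol.1 C hC)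
        have hpos' : 0 < fmax C := hpos _ (mem_entriesOf.2 ⟨C, hC, fmax_mem hCne⟩)
        obtain ⟨C', hC', h1, h2⟩ := hcov (fmax C) (by omega) (by omega)
        have hne : C ≠ C' := by
          intro h; subst h; omega
        have hdisj := hcol.2 C hC C' hC' hne
        have h1' : fmin C' < fmax C := by
          rcases eq_or_lt_of_le h1 with he | h
          · exfalso
            exact Finset.disjoint_left.1 hdisj (he ▸ fmax_mem hCne)
              (fmin_mem (chain_nonempty (hcol.1 C' hC')))
          · exact h
        have hlink : r C C' := ⟨hC, hC', hdisj, Or.inr ⟨by omega, h1'⟩⟩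
        obtain ⟨T, hT, hTm, hpath⟩ := ih (M - fmax C').toNat (by omega) C' hC' rfl
        exact ⟨T, hT, hTm, Relation.ReflTransGen.head hlink hpath⟩
  intro C hC D hD
  obtain ⟨T, hT, hTm, hp1⟩ := key _ C hC rfl
  obtain ⟨T', hT', hTm', hp2⟩ := key _ D hD rfl
  have hTT : T = T' := by
    refine chain_unique hcol (x := M) hT hT' ?_ ?_
    · exact hTm ▸ fmax_mem (chain_nonempty (hcol.1 T hT))
    · exact hTm' ▸ fmax_mem (chain_nonempty (hcol.1 T' hT'))
  subst hTT
  exact hp1.trans (by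
    have hs' : ∀ {X Y}, Relation.ReflTransGen r X Y → Relation.ReflTransGen r Y X := by
      intro X Y hXY
      induction hXY with
      | refl => exact Relation.ReflTransGen.refl
      | tail _ h ih => exact Relation.ReflTransGen.head (hsymm h) ih
    exact hs' hp2)

lemma cover_of_interlaced {S : Finset (Finset ℤ)} (hcol : IsChainCollection S)
    (hint : Interlaced S) (h1 : (1 : ℤ) ∈ entriesOf S) : Cover S := by
  set M := fmax (entriesOf S) with hM
  intro x hx1 hxM
  by_contra hno
  push_neg at hno
  -- every chain is low or high
  have hdicho : ∀ C ∈ S, fmax C ≤ x ∨ x + 1 ≤ fmin C := by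
    intro C hC
    rcases le_or_gt (fmin C) x with h | h
    · left
      have := hno C hC h
      omega
    · right; omega
  obtain ⟨C1, hC1, h1C⟩ := mem_entriesOf.1 h1
  have hMmem : M ∈ entriesOf S := fmax_mem ⟨1, h1⟩
  obtain ⟨T, hT, hMT⟩ := mem_entriesOf.1 hMmem
  -- C1 is low
  have hlow1 : fmax C1 ≤ x := by
    rcases hdicho C1 hC1 with h | h
    · exact h
    · have := fmin_le h1C; omega
  -- T is high
  have hhighT : ¬ fmax T ≤ x := by
    have : M ≤ fmax T := le_fmax hMT
    omega
  -- lowness is preserved along the relation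
  have := hint C1 hC1 T hT
  have hpres : ∀ {X Y}, Relation.ReflTransGen
      (fun X Y => X ∈ S ∧ Y ∈ S ∧ LinkedChains X Y) X Y → fmax X ≤ x → fmax Y ≤ x := by
    intro X Y hXY
    induction hXY with
    | refl => exact id
    | tail h1' h2' ih =>
      intro hX
      have hlowb := ih hX
      obtain ⟨_, hbS, _, hlink⟩ := h2'
      rcases hlink with ⟨ha, hb⟩ | ⟨ha, hb⟩
      · omega
      · rcases hdicho _ hbS with h | h
        · exact h
        · omega
  exact hhighT (hpres this hlow1)

lemma chain_rep {C : Finset ℤ} (h : IsChainSet C) : ∃ k : ℕ, C = mkChain (fmax C) k := by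
  obtain ⟨c, k, rfl⟩ := h
  have h1 : (Finset.range (k + 1)).image (fun i : ℕ => c - 2 * (i : ℤ)) = mkChain c k := rfl
  rw [h1, fmax_mkChain]
  exact ⟨k, rfl⟩

lemma mem_mkChain_self (c : ℤ) (k : ℕ) : c ∈ mkChain c k :=
  mem_mkChain'.2 ⟨by omega, le_rfl, ⟨0, by ring⟩⟩

/-- The set of entries of a configuration and companions -/
def Good (n : ℕ) (S : Finset (Finset ℤ)) : Prop :=
  IsChainCollection S ∧ Cover S ∧ (entriesOf S).card = n ∧
    (∀ x ∈ entriesOf S, 0 < x) ∧ (1 : ℤ) ∈ entriesOf S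

lemma entriesOf_insert (C : Finset ℤ) (S : Finset (Finset ℤ)) :
    entriesOf (insert C S) = C ∪ entriesOf S := Finset.biUnion_insert

lemma le_M {S : Finset (Finset ℤ)} {C : Finset ℤ} {x : ℤ} (hC : C ∈ S) (hx : x ∈ C) :
    x ≤ fmax (entriesOf S) := le_fmax (mem_entriesOf.2 ⟨C, hC, hx⟩)

lemma image_update {S : Finset (Finset ℤ)} {T : Finset ℤ} (hT : T ∈ S)
    (g : Finset ℤ → Finset ℤ) (hg : ∀ C ∈ S, C ≠ T → g C = C) :
    S.image g = insert (g T) (S.erase T) := by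
  ext D
  simp only [mem_image, mem_insert, mem_erase]
  constructor
  · rintro ⟨C, hC, rfl⟩
    by_cases h : C = T
    · subst h; left; rfl
    · right; rw [hg C hC h]; exact ⟨h, hC⟩
  · rintro (rfl | ⟨hne, hD⟩)
    · exact ⟨T, hT, rfl⟩
    · exact ⟨D, hD, hg D hD hne⟩

/-- structure of a good configuration of size ≥ 2 -/
lemma struct {n : ℕ} {S : Finset (Finset ℤ)} (hS : Good n S) (hn : 2 ≤ n) :
    ∃ (T : Finset ℤ) (k : ℕ), T ∈ S ∧ T = mkChain (fmax (entriesOf S)) (k + 1) ∧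
      3 ≤ fmax (entriesOf S) ∧ (n : ℤ) ≤ fmax (entriesOf S) := by
  obtain ⟨hcol, hcov, hcard, hpos, h1⟩ := hS
  set M := fmax (entriesOf S) with hM
  have hEsub : entriesOf S ⊆ Finset.Icc 1 M := by
    intro x hx
    exact Finset.mem_Icc.2 ⟨hpos x hx, le_fmax hx⟩
  have hcard2 : n ≤ M.toNat := by
    calc n = (entriesOf S).card := hcard.symm
    _ ≤ (Finset.Icc (1:ℤ) M).card := Finset.card_le_card hEsub
    _ = M.toNat := by rw [Int.card_Icc]; omega
  have hM2 : 2 ≤ M := by omega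
  obtain ⟨C, hC, hf1, hf2⟩ := hcov (M - 1) (by omega) (by omega)
  have hfC : fmax C = M :=
    le_antisymm (le_M hC (fmax_mem (chain_nonempty (hcol.1 C hC)))) (by omega)
  obtain ⟨k, hk⟩ := chain_rep (hcol.1 C hC)
  rw [hfC] at hk
  have hminC : fmin C = M - 2 * k := by rw [hk, fmin_mkChain]
  have hposmin : 0 < fmin C := hpos _ (mem_entriesOf.2 ⟨C, hC, fmin_mem (chain_nonempty (hcol.1 C hC))⟩)
  match k, hk, hminC with
  | 0, hk, hminC => omega
  | (k' + 1), hk, hminC =>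
    exact ⟨C, k', hC, hk, by omega, by omega⟩

def childa (S : Finset (Finset ℤ)) : Finset (Finset ℤ) :=
  S.image (fun C => if fmax (entriesOf S) ∈ C then insert (fmax (entriesOf S) + 2) C else C)

def childb (S : Finset (Finset ℤ)) : Finset (Finset ℤ) :=
  if fmax (entriesOf S) - 1 ∈ entriesOf S then
    S.image (fun C => if fmax (entriesOf S) - 1 ∈ C then insert (fmax (entriesOf S) + 1) C else C)
  else insert {fmax (entriesOf S) - 1} S

def parent (S : Finset (Finset ℤ)) : Finset (Finset ℤ) :=
  if ({fmax (entriesOf S) - 1} : Finset ℤ) ∈ S then S.erase {fmax (entriesOf S) - 1}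
  else S.image (fun C => if fmax (entriesOf S) ∈ C then C.erase (fmax (entriesOf S)) else C)

lemma childa_good {n : ℕ} {S : Finset (Finset ℤ)} (hS : Good n S) (hn : 2 ≤ n) :
    Good (n + 1) (childa S) ∧
    fmax (entriesOf (childa S)) = fmax (entriesOf S) + 2 ∧
    fmax (entriesOf (childa S)) - 1 ∉ entriesOf (childa S) ∧
    parent (childa S) = S := by
  obtain ⟨T, k, hT, hTeq, hM3, hMn⟩ := struct hS hn
  obtain ⟨hcol, hcov, hcard, hpos, h1⟩ := hS
  set M := fmax (entriesOf S) with hM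
  have hMT : M ∈ T := by rw [hTeq]; exact mem_mkChain_self _ _
  set T' : Finset ℤ := insert (M + 2) T with hT'
  have hT'eq : T' = mkChain (M + 2) (k + 2) := by
    rw [hT', hTeq, insert_top_mkChain]
  have hnotM : ∀ C ∈ S, C ≠ T → M ∉ C := by
    intro C hC hne hMC
    exact hne (chain_unique hcol hC hT hMC hMT)
  set R := S.erase T with hR
  have hSR : S = insert T R := (Finset.insert_erase hT).symm
  have hchilda : childa S = insert T' R := by
    rw [childa, image_update hT _ (fun C hC hne => if_neg (hnotM C hC hne)), if_pos hMT]
  have hME : ∀ x ∈ entriesOf S, x ≤ M := fun x hx => le_fmax hx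
  have hM2E : (M + 2) ∉ entriesOf S := fun h => by have := hME _ h; omega
  have hentries : entriesOf (childa S) = insert (M + 2) (entriesOf S) := by
    rw [hchilda, entriesOf_insert, hT']
    conv_rhs => rw [hSR, entriesOf_insert]
    rw [Finset.insert_union]
  have hfmaxE : fmax (entriesOf (childa S)) = M + 2 := by
    rw [hentries]
    refine fmax_eq (Finset.mem_insert_self _ _) ?_
    intro x hx
    rcases Finset.mem_insert.1 hx with rfl | hx
    · exact le_rfl
    · have := hME x hx; omega
  have hchains : ∀ C ∈ childa S, IsChainSet C := by
    intro C hC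
    rw [hchilda] at hC
    rcases Finset.mem_insert.1 hC with rfl | hC
    · rw [hT'eq]; exact isChainSet_mkChain _ _
    · exact hcol.1 C (Finset.mem_of_mem_erase hC)
  have hdisjT' : ∀ C ∈ R, Disjoint T' C := by
    intro C hC
    rw [Finset.disjoint_left]
    intro x hx hxC
    rcases Finset.mem_insert.1 hx with rfl | hx
    · exact hM2E (mem_entriesOf.2 ⟨C, Finset.mem_of_mem_erase hC, hxC⟩)
    · have hne : T ≠ C := fun h => (Finset.mem_erase.1 hC).1 h.symm
      exact Finset.disjoint_left.1 (hcol.2 T hT C (Finset.mem_of_mem_erase hC) hne) hx hxC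
  have hdisj : ∀ C ∈ childa S, ∀ D ∈ childa S, C ≠ D → Disjoint C D := by
    intro C hC D hD hne
    rw [hchilda] at hC hD
    rcases Finset.mem_insert.1 hC with rfl | hC <;> rcases Finset.mem_insert.1 hD with rfl | hD
    · exact absurd rfl hne
    · exact hdisjT' D hD
    · exact (hdisjT' C hC).symm
    · exact hcol.2 C (Finset.mem_of_mem_erase hC) D (Finset.mem_of_mem_erase hD)
        hne
  have hfmaxT' : fmax T' = M + 2 := by rw [hT'eq, fmax_mkChain]
  have hfminT' : fmin T' = M - 2 * (k + 1) := by
    rw [hT'eq, fmin_mkChain]; push_cast; ring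
  have hfmaxT : fmax T = M := by rw [hTeq, fmax_mkChain]
  have hfminT : fmin T = M - 2 * (k + 1) := by rw [hTeq, fmin_mkChain]; push_cast; ring
  have hT'mem : T' ∈ childa S := by rw [hchilda]; exact Finset.mem_insert_self _ _
  have hcov' : Cover (childa S) := by
    intro x hx1 hx2
    rw [hfmaxE] at hx2
    rcases le_or_gt (x + 1) M with hc | hc
    · obtain ⟨C, hC, hg1, hg2⟩ := hcov x hx1 hc
      by_cases hCT : C = T
      · subst hCT
        exact ⟨T', hT'mem, by omega, by omega⟩
      · refine ⟨C, ?_, hg1, hg2⟩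
        rw [hchilda]
        exact Finset.mem_insert_of_mem (Finset.mem_erase.2 ⟨hCT, hC⟩)
    · exact ⟨T', hT'mem, by omega, by omega⟩
  have hgood : Good (n + 1) (childa S) := by
    refine ⟨⟨hchains, hdisj⟩, hcov', ?_, ?_, ?_⟩
    · rw [hentries, Finset.card_insert_of_notMem hM2E, hcard]
    · intro x hx
      rw [hentries] at hx
      rcases Finset.mem_insert.1 hx with rfl | hx
      · omega
      · exact hpos x hx
    · rw [hentries]; exact Finset.mem_insert_of_mem h1
  have hbit : fmax (entriesOf (childa S)) - 1 ∉ entriesOf (childa S) := by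
    rw [hfmaxE, hentries]
    intro h
    rcases Finset.mem_insert.1 h with h | h
    · omega
    · have := hME _ h; omega
  refine ⟨hgood, hfmaxE, hbit, ?_⟩
  -- parent (childa S) = S
  have hsing : ({fmax (entriesOf (childa S)) - 1} : Finset ℤ) ∉ childa S := by
    intro h
    exact hbit (mem_entriesOf.2 ⟨_, h, Finset.mem_singleton_self _⟩)
  rw [parent, if_neg hsing, hfmaxE]
  have hM2notC : ∀ C ∈ childa S, C ≠ T' → (M + 2) ∉ C := by
    intro C hC hne hmem
    rw [hchilda] at hC
    rcases Finset.mem_insert.1 hC with rfl | hC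
    · exact hne rfl
    · exact hM2E (mem_entriesOf.2 ⟨C, Finset.mem_of_mem_erase hC, hmem⟩)
  rw [image_update hT'mem _ (fun C hC hne => if_neg (hM2notC C hC hne)),
    if_pos (Finset.mem_insert_self _ _ : (M + 2) ∈ T')]
  have h1e : T'.erase (M + 2) = T := by
    rw [hT', Finset.erase_insert]
    intro h
    exact hM2E (mem_entriesOf.2 ⟨T, hT, h⟩)
  have hT'R : T' ∉ R := by
    intro h
    exact hM2E (mem_entriesOf.2 ⟨T', Finset.mem_of_mem_erase h, Finset.mem_insert_self _ _⟩)
  rw [h1e, hchilda, Finset.erase_insert hT'R]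
  exact hSR.symm

lemma childb_good {n : ℕ} {S : Finset (Finset ℤ)} (hS : Good n S) (hn : 2 ≤ n) :
    Good (n + 1) (childb S) ∧
    fmax (entriesOf (childb S)) - 1 ∈ entriesOf (childb S) ∧
    parent (childb S) = S := by
  obtain ⟨T, k, hT, hTeq, hM3, hMn⟩ := struct hS hn
  obtain ⟨hcol, hcov, hcard, hpos, h1⟩ := hS
  set M := fmax (entriesOf S) with hM
  have hMT : M ∈ T := by rw [hTeq]; exact mem_mkChain_self _ _
  have hMm2T : M - 2 ∈ T := by
    rw [hTeq]; rw [mem_mkChain']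
    refine ⟨by push_cast; omega, by omega, ⟨1, by ring⟩⟩
  have hME : ∀ x ∈ entriesOf S, x ≤ M := fun x hx => le_fmax hx
  by_cases hMem : M - 1 ∈ entriesOf S
  · -- extend the chain containing M - 1
    obtain ⟨U, hU, hU1⟩ := mem_entriesOf.1 hMem
    have hMnotU : M ∉ U := by
      intro h
      have := chain_unique hcol hU hT h hMT
      subst this
      rw [hTeq, mem_mkChain'] at hU1
      omega
    have hfU : fmax U = M - 1 := by
      refine le_antisymm ?_ (le_fmax hU1)
      have h2 := le_M hU (fmax_mem (chain_nonempty (hcol.1 U hU)))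
      rcases eq_or_lt_of_le h2 with he | h
      · exfalso; apply hMnotU; rw [hM, ← he]; exact fmax_mem (chain_nonempty (hcol.1 U hU))
      · omega
    obtain ⟨j, hUrep⟩ := chain_rep (hcol.1 U hU)
    rw [hfU] at hUrep
    set U' : Finset ℤ := insert (M + 1) U with hU'
    have hU'eq : U' = mkChain (M + 1) (j + 1) := by
      have := insert_top_mkChain (M - 1) j
      rw [hU', hUrep]
      rw [show M - 1 + 2 = M + 1 by ring] at this
      exact this
    have hnotU : ∀ C ∈ S, C ≠ U → M - 1 ∉ C := by
      intro C hC hne hm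
      exact hne (chain_unique hcol hC hU hm hU1)
    set R := S.erase U with hR
    have hSR : S = insert U R := (Finset.insert_erase hU).symm
    have hchildb : childb S = insert U' R := by
      rw [childb, if_pos hMem, image_update hU _ (fun C hC hne => if_neg (hnotU C hC hne)),
        if_pos hU1]
    have hM1E : (M + 1) ∉ entriesOf S := fun h => by have := hME _ h; omega
    have hentries : entriesOf (childb S) = insert (M + 1) (entriesOf S) := by
      rw [hchildb, entriesOf_insert, hU']
      conv_rhs => rw [hSR, entriesOf_insert]
      rw [Finset.insert_union]
    have hfmaxE : fmax (entriesOf (childb S)) = M + 1 := by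
      rw [hentries]
      refine fmax_eq (Finset.mem_insert_self _ _) ?_
      intro x hx
      rcases Finset.mem_insert.1 hx with rfl | hx
      · exact le_rfl
      · have := hME x hx; omega
    have hfmaxU' : fmax U' = M + 1 := by rw [hU'eq, fmax_mkChain]
    have hfminU' : fmin U' = M - 1 - 2 * j := by
      rw [hU'eq, fmin_mkChain]; push_cast; ring
    have hfmaxU : fmax U = M - 1 := hfU
    have hfminU : fmin U = M - 1 - 2 * j := by rw [hUrep, fmin_mkChain]
    have hU'mem : U' ∈ childb S := by rw [hchildb]; exact Finset.mem_insert_self _ _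
    have hchains : ∀ C ∈ childb S, IsChainSet C := by
      intro C hC
      rw [hchildb] at hC
      rcases Finset.mem_insert.1 hC with rfl | hC
      · rw [hU'eq]; exact isChainSet_mkChain _ _
      · exact hcol.1 C (Finset.mem_of_mem_erase hC)
    have hdisjU' : ∀ C ∈ R, Disjoint U' C := by
      intro C hC
      rw [Finset.disjoint_left]
      intro x hx hxC
      rcases Finset.mem_insert.1 hx with rfl | hx
      · exact hM1E (mem_entriesOf.2 ⟨C, Finset.mem_of_mem_erase hC, hxC⟩)
      · have hne : U ≠ C := fun h => (Finset.mem_erase.1 hC).1 h.symm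
        exact Finset.disjoint_left.1 (hcol.2 U hU C (Finset.mem_of_mem_erase hC) hne) hx hxC
    have hdisj : ∀ C ∈ childb S, ∀ D ∈ childb S, C ≠ D → Disjoint C D := by
      intro C hC D hD hne
      rw [hchildb] at hC hD
      rcases Finset.mem_insert.1 hC with rfl | hC <;> rcases Finset.mem_insert.1 hD with rfl | hD
      · exact absurd rfl hne
      · exact hdisjU' D hD
      · exact (hdisjU' C hC).symm
      · exact hcol.2 C (Finset.mem_of_mem_erase hC) D (Finset.mem_of_mem_erase hD) hne
    have hcov' : Cover (childb S) := by
      intro x hx1 hx2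
      rw [hfmaxE] at hx2
      rcases le_or_gt (x + 1) M with hc | hc
      · obtain ⟨C, hC, hg1, hg2⟩ := hcov x hx1 hc
        by_cases hCU : C = U
        · subst hCU
          exact ⟨U', hU'mem, by omega, by omega⟩
        · exact ⟨C, by rw [hchildb]; exact Finset.mem_insert_of_mem (Finset.mem_erase.2 ⟨hCU, hC⟩),
            hg1, hg2⟩
      · exact ⟨U', hU'mem, by omega, by omega⟩
    have hgood : Good (n + 1) (childb S) := by
      refine ⟨⟨hchains, hdisj⟩, hcov', ?_, ?_, ?_⟩
      · rw [hentries, Finset.card_insert_of_notMem hM1E, hcard]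
      · intro x hx
        rw [hentries] at hx
        rcases Finset.mem_insert.1 hx with rfl | hx
        · omega
        · exact hpos x hx
      · rw [hentries]; exact Finset.mem_insert_of_mem h1
    have hbit : fmax (entriesOf (childb S)) - 1 ∈ entriesOf (childb S) := by
      rw [hfmaxE, hentries]
      refine Finset.mem_insert_of_mem ?_
      rw [show M + 1 - 1 = M by ring]
      exact fmax_mem ⟨1, h1⟩
    refine ⟨hgood, hbit, ?_⟩
    -- parent (childb S) = S
    have hsing : ({fmax (entriesOf (childb S)) - 1} : Finset ℤ) ∉ childb S := by
      rw [hfmaxE, show M + 1 - 1 = M by ring]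
      intro h
      rw [hchildb] at h
      rcases Finset.mem_insert.1 h with h | h
      · have : M ∈ U' := h ▸ Finset.mem_singleton_self M
        rcases Finset.mem_insert.1 this with h' | h'
        · omega
        · exact hMnotU h'
      · have hMmem : M ∈ ({M} : Finset ℤ) := Finset.mem_singleton_self M
        have := chain_unique hcol (Finset.mem_of_mem_erase h) hT hMmem hMT
        have : M - 2 ∈ ({M} : Finset ℤ) := this ▸ hMm2T
        rw [Finset.mem_singleton] at this
        omega
    rw [parent, if_neg hsing, hfmaxE]
    have hMnotC : ∀ C ∈ childb S, C ≠ U' → (M + 1) ∉ C := by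
      intro C hC hne hmem
      rw [hchildb] at hC
      rcases Finset.mem_insert.1 hC with rfl | hC
      · exact hne rfl
      · exact hM1E (mem_entriesOf.2 ⟨C, Finset.mem_of_mem_erase hC, hmem⟩)
    rw [image_update hU'mem _ (fun C hC hne => if_neg (hMnotC C hC hne)),
      if_pos (Finset.mem_insert_self _ _ : (M + 1) ∈ U')]
    have h1e : U'.erase (M + 1) = U := by
      rw [hU', Finset.erase_insert]
      intro h
      exact hM1E (mem_entriesOf.2 ⟨U, hU, h⟩)
    have hU'R : U' ∉ R := by
      intro h
      exact hM1E (mem_entriesOf.2 ⟨U', Finset.mem_of_mem_erase h, Finset.mem_insert_self _ _⟩)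
    rw [h1e, hchildb, Finset.erase_insert hU'R]
    exact hSR.symm
  · -- add a new singleton chain {M - 1}
    set V : Finset ℤ := {M - 1} with hV
    have hVS : V ∉ S := by
      intro h
      exact hMem (mem_entriesOf.2 ⟨V, h, Finset.mem_singleton_self _⟩)
    have hchildb : childb S = insert V S := by rw [childb, if_neg hMem]
    have hentries : entriesOf (childb S) = insert (M - 1) (entriesOf S) := by
      rw [hchildb, entriesOf_insert, hV]
      ext y
      simp [or_comm]
    have hfmaxE : fmax (entriesOf (childb S)) = M := by
      rw [hentries]
      refine fmax_eq (Finset.mem_insert_of_mem (fmax_mem ⟨1, h1⟩)) ?_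
      intro x hx
      rcases Finset.mem_insert.1 hx with rfl | hx
      · omega
      · exact hME x hx
    have hchains : ∀ C ∈ childb S, IsChainSet C := by
      intro C hC
      rw [hchildb] at hC
      rcases Finset.mem_insert.1 hC with rfl | hC
      · rw [hV, ← mkChain_zero]; exact isChainSet_mkChain _ _
      · exact hcol.1 C hC
    have hdisjV : ∀ C ∈ S, Disjoint V C := by
      intro C hC
      rw [hV, Finset.disjoint_singleton_left]
      intro h
      exact hMem (mem_entriesOf.2 ⟨C, hC, h⟩)
    have hdisj : ∀ C ∈ childb S, ∀ D ∈ childb S, C ≠ D → Disjoint C D := by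
      intro C hC D hD hne
      rw [hchildb] at hC hD
      rcases Finset.mem_insert.1 hC with rfl | hC <;> rcases Finset.mem_insert.1 hD with rfl | hD
      · exact absurd rfl hne
      · exact hdisjV D hD
      · exact (hdisjV C hC).symm
      · exact hcol.2 C hC D hD hne
    have hcov' : Cover (childb S) := by
      intro x hx1 hx2
      rw [hfmaxE] at hx2
      obtain ⟨C, hC, hg1, hg2⟩ := hcov x hx1 hx2
      exact ⟨C, by rw [hchildb]; exact Finset.mem_insert_of_mem hC, hg1, hg2⟩
    have hgood : Good (n + 1) (childb S) := by
      refine ⟨⟨hchains, hdisj⟩, hcov', ?_, ?_, ?_⟩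
      · rw [hentries, Finset.card_insert_of_notMem hMem, hcard]
      · intro x hx
        rw [hentries] at hx
        rcases Finset.mem_insert.1 hx with rfl | hx
        · omega
        · exact hpos x hx
      · rw [hentries]; exact Finset.mem_insert_of_mem h1
    have hbit : fmax (entriesOf (childb S)) - 1 ∈ entriesOf (childb S) := by
      rw [hfmaxE, hentries]
      exact Finset.mem_insert_self _ _
    refine ⟨hgood, hbit, ?_⟩
    have hsing : ({fmax (entriesOf (childb S)) - 1} : Finset ℤ) ∈ childb S := by
      rw [hfmaxE, hchildb]
      exact Finset.mem_insert_self _ _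
    rw [parent, if_pos hsing, hfmaxE, hchildb]
    exact Finset.erase_insert hVS

lemma parent_good {n : ℕ} {S : Finset (Finset ℤ)} (hS : Good (n + 1) S) (hn : 2 ≤ n) :
    Good n (parent S) ∧
      (fmax (entriesOf S) - 1 ∈ entriesOf S → childb (parent S) = S) ∧
      (fmax (entriesOf S) - 1 ∉ entriesOf S → childa (parent S) = S) := by
  obtain ⟨T, k, hT, hTeq, hM3, hMn⟩ := struct hS (by omega)
  obtain ⟨hcol, hcov, hcard, hpos, h1⟩ := hS
  set M := fmax (entriesOf S) with hM
  have hMT : M ∈ T := by rw [hTeq]; exact mem_mkChain_self _ _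
  have hMm2T : M - 2 ∈ T := by
    rw [hTeq, mem_mkChain']
    refine ⟨by push_cast; omega, by omega, ⟨1, by ring⟩⟩
  have hME : ∀ x ∈ entriesOf S, x ≤ M := fun x hx => le_fmax hx
  have hMn' : (3 : ℤ) ≤ M := hM3
  have hn3 : (n : ℤ) + 1 ≤ M := by exact_mod_cast hMn
  have h1M : (1 : ℤ) ≠ M - 1 := by omega
  have hfmaxT : fmax T = M := by rw [hTeq, fmax_mkChain]
  have hfminT : fmin T = M - 2 * (k + 1) := by rw [hTeq, fmin_mkChain]; push_cast; ring
  have huniqT : ∀ C ∈ S, M ∈ C → C = T := fun C hC h => chain_unique hcol hC hT h hMT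
  have huniqT2 : ∀ C ∈ S, M - 2 ∈ C → C = T := fun C hC h => chain_unique hcol hC hT h hMm2T
  by_cases hsing : ({M - 1} : Finset ℤ) ∈ S
  · -- case B1 : remove the singleton {M-1}
    have hMem : M - 1 ∈ entriesOf S :=
      mem_entriesOf.2 ⟨_, hsing, Finset.mem_singleton_self _⟩
    set V : Finset ℤ := {M - 1} with hV
    set R := S.erase V with hR
    have hSR : S = insert V R := (Finset.insert_erase hsing).symm
    have hparent : parent S = R := by rw [parent, if_pos hsing]
    have huniqV : ∀ C ∈ S, M - 1 ∈ C → C = V :=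
      fun C hC h => chain_unique hcol hC hsing h (Finset.mem_singleton_self _)
    have hM1R : M - 1 ∉ entriesOf R := by
      intro h
      obtain ⟨C, hC, hxC⟩ := mem_entriesOf.1 h
      exact (Finset.mem_erase.1 hC).1 (huniqV C (Finset.mem_of_mem_erase hC) hxC)
    have hentries : entriesOf (parent S) = (entriesOf S).erase (M - 1) := by
      rw [hparent]
      conv_rhs => rw [hSR, entriesOf_insert]
      ext x
      simp only [Finset.mem_erase, Finset.mem_union, hV, Finset.mem_singleton]
      constructor
      · intro hx
        exact ⟨fun h => hM1R (h ▸ hx), Or.inr hx⟩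
      · rintro ⟨hne, (rfl | hx)⟩
        · exact absurd rfl hne
        · exact hx
    have hVmax : fmax V = M - 1 := by rw [hV, ← mkChain_zero, fmax_mkChain]
    have hVmin : fmin V = M - 1 := by
      rw [hV, ← mkChain_zero, fmin_mkChain]; push_cast; ring
    have hfmaxR : fmax (entriesOf (parent S)) = M := by
      rw [hentries]
      refine fmax_eq (Finset.mem_erase.2 ⟨by omega, fmax_mem ⟨1, h1⟩⟩) ?_
      intro x hx
      exact hME x (Finset.mem_of_mem_erase hx)
    have hgood : Good n (parent S) := by
      refine ⟨⟨?_, ?_⟩, ?_, ?_, ?_, ?_⟩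
      · intro C hC; rw [hparent] at hC; exact hcol.1 C (Finset.mem_of_mem_erase hC)
      · intro C hC D hD hne
        rw [hparent] at hC hD
        exact hcol.2 C (Finset.mem_of_mem_erase hC) D (Finset.mem_of_mem_erase hD) hne
      · intro x hx1 hx2
        rw [hfmaxR] at hx2
        obtain ⟨C, hC, hg1, hg2⟩ := hcov x hx1 hx2
        have hCV : C ≠ V := by
          intro h; subst h; omega
        exact ⟨C, by rw [hparent]; exact Finset.mem_erase.2 ⟨hCV, hC⟩, hg1, hg2⟩
      · rw [hentries, Finset.card_erase_of_mem hMem, hcard]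
        omega
      · intro x hx
        rw [hentries] at hx
        exact hpos x (Finset.mem_of_mem_erase hx)
      · rw [hentries]; exact Finset.mem_erase.2 ⟨h1M, h1⟩
    refine ⟨hgood, fun _ => ?_, fun h => absurd hMem h⟩
    have hcond : fmax (entriesOf (parent S)) - 1 ∉ entriesOf (parent S) := by
      rw [hfmaxR, hentries]
      intro h
      exact (Finset.mem_erase.1 h).1 rfl
    rw [childb, if_neg hcond, hfmaxR, hparent]
    rw [hSR]
  · -- image branch : remove M from its chain T
    have hTV : T ≠ ({M - 1} : Finset ℤ) := by
      intro h
      rw [h, Finset.mem_singleton] at hMT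
      omega
    set Tm : Finset ℤ := T.erase M with hTm
    have hTmeq : Tm = mkChain (M - 2) k := by rw [hTm, hTeq, erase_top_mkChain]
    set R := S.erase T with hR
    have hSR : S = insert T R := (Finset.insert_erase hT).symm
    have hparent : parent S = insert Tm R := by
      rw [parent, if_neg hsing,
        image_update hT _ (fun C hC hne => if_neg (fun h => hne (huniqT C hC h))),
        if_pos hMT]
    have hMR : M ∉ entriesOf R := by
      intro h
      obtain ⟨C, hC, hxC⟩ := mem_entriesOf.1 h
      exact (Finset.mem_erase.1 hC).1 (huniqT C (Finset.mem_of_mem_erase hC) hxC)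
    have hentries : entriesOf (parent S) = (entriesOf S).erase M := by
      rw [hparent, entriesOf_insert]
      conv_rhs => rw [hSR, entriesOf_insert]
      ext x
      simp only [Finset.mem_erase, Finset.mem_union, hTm]
      constructor
      · rintro (⟨hne, hx⟩ | hx)
        · exact ⟨hne, Or.inl hx⟩
        · exact ⟨fun h => hMR (h ▸ hx), Or.inr hx⟩
      · rintro ⟨hne, (hx | hx)⟩
        · exact Or.inl ⟨hne, hx⟩
        · exact Or.inr hx
    have hMm2Tm : M - 2 ∈ Tm := by
      rw [hTmeq]; exact mem_mkChain_self _ _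
    have hfminTm : fmin Tm = M - 2 * (k + 1) := by
      rw [hTmeq, fmin_mkChain]; push_cast; ring
    have hfmaxTm : fmax Tm = M - 2 := by rw [hTmeq, fmax_mkChain]
    have hTmR : Tm ∉ R := by
      intro h
      have := huniqT2 Tm (Finset.mem_of_mem_erase h) hMm2Tm
      rw [this] at h
      exact (Finset.mem_erase.1 h).1 rfl
    have hTmmem : Tm ∈ parent S := by rw [hparent]; exact Finset.mem_insert_self _ _
    have hcard' : (entriesOf (parent S)).card = n := by
      rw [hentries, Finset.card_erase_of_mem (fmax_mem ⟨1, h1⟩), hcard]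
      omega
    have hchains : ∀ C ∈ parent S, IsChainSet C := by
      intro C hC
      rw [hparent] at hC
      rcases Finset.mem_insert.1 hC with rfl | hC
      · rw [hTmeq]; exact isChainSet_mkChain _ _
      · exact hcol.1 C (Finset.mem_of_mem_erase hC)
    have hdisj : ∀ C ∈ parent S, ∀ D ∈ parent S, C ≠ D → Disjoint C D := by
      intro C hC D hD hne
      rw [hparent] at hC hD
      have key : ∀ D' ∈ R, Disjoint Tm D' := by
        intro D' hD'
        refine Finset.disjoint_of_subset_left (Finset.erase_subset _ _) ?_
        exact hcol.2 T hT D' (Finset.mem_of_mem_erase hD')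
          (fun h => (Finset.mem_erase.1 hD').1 h.symm)
      rcases Finset.mem_insert.1 hC with rfl | hC <;> rcases Finset.mem_insert.1 hD with rfl | hD
      · exact absurd rfl hne
      · exact key D hD
      · exact (key C hC).symm
      · exact hcol.2 C (Finset.mem_of_mem_erase hC) D (Finset.mem_of_mem_erase hD) hne
    have hpos' : ∀ x ∈ entriesOf (parent S), 0 < x := by
      intro x hx
      rw [hentries] at hx
      exact hpos x (Finset.mem_of_mem_erase hx)
    have h1' : (1 : ℤ) ∈ entriesOf (parent S) := by
      rw [hentries]
      exact Finset.mem_erase.2 ⟨by omega, h1⟩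
    by_cases hMem : M - 1 ∈ entriesOf S
    · -- case B2
      obtain ⟨V, hV, hV1⟩ := mem_entriesOf.1 hMem
      have hMnotV : M ∉ V := by
        intro h
        have := huniqT V hV h
        subst this
        rw [hTeq, mem_mkChain'] at hV1
        omega
      have hVT : V ≠ T := fun h => hMnotV (h ▸ hMT)
      have hfV : fmax V = M - 1 := by
        refine le_antisymm ?_ (le_fmax hV1)
        have h2 := le_M hV (fmax_mem (chain_nonempty (hcol.1 V hV)))
        rcases eq_or_lt_of_le h2 with he | h
        · exfalso; apply hMnotV; rw [hM, ← he]
          exact fmax_mem (chain_nonempty (hcol.1 V hV))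
        · omega
      obtain ⟨j, hVrep⟩ := chain_rep (hcol.1 V hV)
      rw [hfV] at hVrep
      have hj : j ≠ 0 := by
        intro h
        subst h
        rw [mkChain_zero] at hVrep
        exact hsing (hVrep ▸ hV)
      have hM3V : M - 3 ∈ V := by
        rw [hVrep, mem_mkChain']
        refine ⟨by omega, by omega, ⟨1, by ring⟩⟩
      have hfminV : fmin V ≤ M - 3 := fmin_le hM3V
      have hVmem : V ∈ parent S := by
        rw [hparent]
        exact Finset.mem_insert_of_mem (Finset.mem_erase.2 ⟨hVT, hV⟩)
      have hfmaxR : fmax (entriesOf (parent S)) = M - 1 := by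
        rw [hentries]
        refine fmax_eq (Finset.mem_erase.2 ⟨by omega, hMem⟩) ?_
        intro x hx
        have h1x := hME x (Finset.mem_of_mem_erase hx)
        have h2x := (Finset.mem_erase.1 hx).1
        omega
      have hcov' : Cover (parent S) := by
        intro x hx1 hx2
        rw [hfmaxR] at hx2
        rcases le_or_gt (x + 1) (M - 2) with hc | hc
        · obtain ⟨C, hC, hg1, hg2⟩ := hcov x hx1 (by omega)
          by_cases hCT : C = T
          · subst hCT
            exact ⟨Tm, hTmmem, by omega, by omega⟩
          · refine ⟨C, ?_, hg1, hg2⟩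
            rw [hparent]
            exact Finset.mem_insert_of_mem (Finset.mem_erase.2 ⟨hCT, hC⟩)
        · exact ⟨V, hVmem, by omega, by omega⟩
      have hgood : Good n (parent S) :=
        ⟨⟨hchains, hdisj⟩, hcov', hcard', hpos', h1'⟩
      refine ⟨hgood, fun _ => ?_, fun h => absurd hMem h⟩
      -- childb (parent S) = S
      have hcond : fmax (entriesOf (parent S)) - 1 ∈ entriesOf (parent S) := by
        rw [hfmaxR, hentries]
        refine Finset.mem_erase.2 ⟨by omega, ?_⟩
        rw [show M - 1 - 1 = M - 2 by ring]
        exact mem_entriesOf.2 ⟨T, hT, hMm2T⟩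
      have huniqTm : ∀ C ∈ parent S, fmax (entriesOf (parent S)) - 1 ∈ C → C = Tm := by
        intro C hC hx
        rw [hfmaxR, show M - 1 - 1 = M - 2 by ring] at hx
        rw [hparent] at hC
        rcases Finset.mem_insert.1 hC with rfl | hC
        · rfl
        · exfalso
          have := huniqT2 C (Finset.mem_of_mem_erase hC) hx
          exact (Finset.mem_erase.1 hC).1 this
      have hTmcond : fmax (entriesOf (parent S)) - 1 ∈ Tm := by
        rw [hfmaxR, show M - 1 - 1 = M - 2 by ring]
        exact hMm2Tm
      rw [childb, if_pos hcond,
        image_update hTmmem _ (fun C hC hne => if_neg (fun h => hne (huniqTm C hC h))),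
        if_pos hTmcond, hfmaxR, show M - 1 + 1 = M by ring, hTm,
        Finset.insert_erase hMT, hparent, Finset.erase_insert hTmR]
      rw [hSR]
    · -- case A
      have hfmaxR : fmax (entriesOf (parent S)) = M - 2 := by
        rw [hentries]
        refine fmax_eq (Finset.mem_erase.2 ⟨by omega, mem_entriesOf.2 ⟨T, hT, hMm2T⟩⟩) ?_
        intro x hx
        have h1x := hME x (Finset.mem_of_mem_erase hx)
        have h2x := (Finset.mem_erase.1 hx).1
        have h3x : x ≠ M - 1 := fun h => hMem (h ▸ Finset.mem_of_mem_erase hx)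
        omega
      have hcov' : Cover (parent S) := by
        intro x hx1 hx2
        rw [hfmaxR] at hx2
        obtain ⟨C, hC, hg1, hg2⟩ := hcov x hx1 (by omega)
        by_cases hCT : C = T
        · subst hCT
          exact ⟨Tm, hTmmem, by omega, by omega⟩
        · refine ⟨C, ?_, hg1, hg2⟩
          rw [hparent]
          exact Finset.mem_insert_of_mem (Finset.mem_erase.2 ⟨hCT, hC⟩)
      have hgood : Good n (parent S) :=
        ⟨⟨hchains, hdisj⟩, hcov', hcard', hpos', h1'⟩
      refine ⟨hgood, fun h => absurd h hMem, fun _ => ?_⟩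
      -- childa (parent S) = S
      have huniqTm : ∀ C ∈ parent S, fmax (entriesOf (parent S)) ∈ C → C = Tm := by
        intro C hC hx
        rw [hfmaxR] at hx
        rw [hparent] at hC
        rcases Finset.mem_insert.1 hC with rfl | hC
        · rfl
        · exfalso
          have := huniqT2 C (Finset.mem_of_mem_erase hC) hx
          exact (Finset.mem_erase.1 hC).1 this
      have hTmcond : fmax (entriesOf (parent S)) ∈ Tm := by
        rw [hfmaxR]; exact hMm2Tm
      rw [childa,
        image_update hTmmem _ (fun C hC hne => if_neg (fun h => hne (huniqTm C hC h))),
        if_pos hTmcond, hfmaxR, show M - 2 + 2 = M by ring, hTm,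
        Finset.insert_erase hMT, hparent, Finset.erase_insert hTmR]
      rw [hSR]

lemma adm_iff_good {n : ℕ} {S : Finset (Finset ℤ)} :
    AdmissibleConfig n S ↔ Good n S := by
  constructor
  · rintro ⟨hcol, hint, hcard, hpos, h1⟩
    exact ⟨hcol, cover_of_interlaced hcol hint h1, hcard, hpos, h1⟩
  · rintro ⟨hcol, hcov, hcard, hpos, h1⟩
    exact ⟨hcol, interlaced_of_cover hcol hpos hcov, hcard, hpos, h1⟩

lemma good_bound {n : ℕ} {S : Finset (Finset ℤ)} (hS : Good n S) :
    ∀ C ∈ S, C ⊆ Finset.Icc (1 : ℤ) (2 * n) := by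
  obtain ⟨hcol, hcov, hcard, hpos, h1⟩ := hS
  set M := fmax (entriesOf S) with hM
  set E := entriesOf S with hE
  have hstep : ∀ x : ℤ, 1 ≤ x → x + 1 ≤ M → x ∈ E ∨ x + 1 ∈ E := by
    intro x hx1 hx2
    obtain ⟨C, hC, hg1, hg2⟩ := hcov x hx1 hx2
    obtain ⟨k, hk⟩ := chain_rep (hcol.1 C hC)
    have hmin : fmin C = fmax C - 2 * k := by rw [hk, fmin_mkChain]; rw [← hk]
    rcases chain_hits (c := fmax C) (k := k) (x := x) (by omega) hg2 with h | h
    · exact Or.inl (mem_entriesOf.2 ⟨C, hC, hk ▸ h⟩)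
    · exact Or.inr (mem_entriesOf.2 ⟨C, hC, hk ▸ h⟩)
  have hsub : Finset.Icc (1 : ℤ) M ⊆ E ∪ E.image (· + 1) := by
    intro y hy
    rw [Finset.mem_Icc] at hy
    rcases eq_or_lt_of_le hy.1 with rfl | hgt
    · exact Finset.mem_union_left _ h1
    · rcases hstep (y - 1) (by omega) (by omega) with h | h
      · refine Finset.mem_union_right _ (Finset.mem_image.2 ⟨y - 1, h, by ring⟩)
      · rw [show y - 1 + 1 = y by ring] at h
        exact Finset.mem_union_left _ h
  have hcard2 : M.toNat ≤ 2 * n := by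
    calc M.toNat = (Finset.Icc (1 : ℤ) M).card := by rw [Int.card_Icc]; omega
    _ ≤ (E ∪ E.image (· + 1)).card := Finset.card_le_card hsub
    _ ≤ E.card + (E.image (· + 1)).card := Finset.card_union_le _ _
    _ ≤ E.card + E.card := Nat.add_le_add_left Finset.card_image_le _
    _ = 2 * n := by rw [hcard]; ring
  intro C hC x hx
  have hxE : x ∈ E := mem_entriesOf.2 ⟨C, hC, hx⟩
  have := hpos x hxE
  have := le_fmax hxE
  rw [Finset.mem_Icc]
  omega

lemma adm_finite (m : ℕ) : {S : Finset (Finset ℤ) | AdmissibleConfig m S}.Finite := by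
  refine Set.Finite.subset (Finset.finite_toSet
    ((Finset.Icc (1 : ℤ) (2 * m)).powerset.powerset)) ?_
  intro S hS
  simp only [Finset.coe_powerset, Set.mem_preimage, Set.mem_powerset_iff,
    Finset.mem_coe, Finset.mem_powerset]
  intro C hC
  simp only [Finset.mem_coe] at hC
  have := good_bound (adm_iff_good.1 hS) C hC
  intro x hx
  exact this (by exact_mod_cast hx)

theorem admissible_config_doubling (n : ℕ) (hn : 2 ≤ n) :
    {S : Finset (Finset ℤ) | AdmissibleConfig n S}.Finite ∧
    {S : Finset (Finset ℤ) | AdmissibleConfig (n + 1) S}.Finite ∧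
    {S : Finset (Finset ℤ) | AdmissibleConfig (n + 1) S}.ncard =
      2 * {S : Finset (Finset ℤ) | AdmissibleConfig n S}.ncard := by
  refine ⟨adm_finite n, adm_finite (n + 1), ?_⟩
  have hAeq : ∀ m, {S : Finset (Finset ℤ) | AdmissibleConfig m S} =
      {S : Finset (Finset ℤ) | Good m S} := by
    intro m; ext S; exact adm_iff_good
  set G : Set (Finset (Finset ℤ)) := {S | Good n S} with hG
  have hGfin : G.Finite := by
    rw [hG, ← hAeq n]
    exact adm_finite n
  have hkey : {S : Finset (Finset ℤ) | Good (n + 1) S} = childa '' G ∪ childb '' G := by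
    ext S'
    constructor
    · intro hS'
      obtain ⟨hgood, hb, ha⟩ := parent_good hS' hn
      by_cases hbit : fmax (entriesOf S') - 1 ∈ entriesOf S'
      · exact Or.inr ⟨parent S', hgood, hb hbit⟩
      · exact Or.inl ⟨parent S', hgood, ha hbit⟩
    · rintro (⟨S, hSG, rfl⟩ | ⟨S, hSG, rfl⟩)
      · exact (childa_good hSG hn).1
      · exact (childb_good hSG hn).1
  have hinja : Set.InjOn childa G := by
    intro S1 h1 S2 h2 heq
    have e1 := (childa_good h1 hn).2.2.2
    have e2 := (childa_good h2 hn).2.2.2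
    rw [← e1, ← e2, heq]
  have hinjb : Set.InjOn childb G := by
    intro S1 h1 S2 h2 heq
    have e1 := (childb_good h1 hn).2.2
    have e2 := (childb_good h2 hn).2.2
    rw [← e1, ← e2, heq]
  have hdisj : Disjoint (childa '' G) (childb '' G) := by
    rw [Set.disjoint_left]
    rintro S' ⟨S1, h1, rfl⟩ ⟨S2, h2, heq⟩
    have hb := (childb_good h2 hn).2.1
    rw [heq] at hb
    exact (childa_good h1 hn).2.2.1 hb
  rw [hAeq, hAeq, hkey,
    Set.ncard_union_eq hdisj (hGfin.image _) (hGfin.image _),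
    Set.ncard_image_of_injOn hinja, Set.ncard_image_of_injOn hinjb]
  ring


end AC

/-- For every `n ≥ 2`, the sets of admissible configurations of sizes `n` and `n + 1` are
finite, and the number of admissible configurations of size `n + 1` is exactly twice the
number of admissible configurations of size `n`. -/
theorem admissible_config_doubling (n : ℕ) (hn : 2 ≤ n) :
    {S : Finset (Finset ℤ) | AdmissibleConfig n S}.Finite ∧
    {S : Finset (Finset ℤ) | AdmissibleConfig (n + 1) S}.Finite ∧
    {S : Finset (Finset ℤ) | AdmissibleConfig (n + 1) S}.ncard =
      2 * {S : Finset (Finset ℤ) | AdmissibleConfig n S}.ncard :=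
  AC.admissible_config_doubling n hn
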